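/- Let x₀ ∈ (α,β) and for h > 0 define the Gaussian quasimode φ_h(x) := exp(−(x − x₀)²/(2h)). Then the Rayleigh quotient of φ_h converges to −σ(x₀): (h² ∫_α^β φ_h'(x)² dx − ∫_α^β σ(x) φ_h(x)² dx) / ∫_α^β φ_h(x)² dx → −σ(x₀) as h → 0⁺. In particular, if x₀ is an interior global maximizer of σ on [α,β], then limsup_{h→0⁺} R(h) ≤ −max_{[α,β]} σ. -/

import Mathlib

open MeasureTheory Set Filter Topology

/-- The Neumann Rayleigh quotient infimum
`R(h) = inf { (h² ∫ φ′² − ∫ σ φ²) / ∫ φ² : φ ∈ C¹, ∫ φ² > 0 }`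
for the Schrödinger operator `−h²Δ − σ` on `[α,β]`. -/
noncomputable def rayleighInf (α β : ℝ) (σ : ℝ → ℝ) (h : ℝ) : ℝ :=
  sInf { r : ℝ | ∃ φ : ℝ → ℝ, ContDiff ℝ 1 φ ∧ (0 < ∫ x in α..β, φ x ^ 2) ∧
    r = (h ^ 2 * (∫ x in α..β, deriv φ x ^ 2) - ∫ x in α..β, σ x * φ x ^ 2) /
        ∫ x in α..β, φ x ^ 2 }

namespace GaussQM

/-- The squared Gaussian. -/
noncomputable def E (x₀ h x : ℝ) : ℝ := Real.exp (-(x - x₀) ^ 2 / h)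

lemma contE (x₀ h : ℝ) : Continuous (E x₀ h) := by
  unfold E; fun_prop

lemma Epos (x₀ h x : ℝ) : 0 < E x₀ h x := Real.exp_pos _

lemma intE (x₀ h a b : ℝ) : IntervalIntegrable (E x₀ h) volume a b :=
  (contE x₀ h).intervalIntegrable a b

/-- Normalization. -/
noncomputable def N (α β x₀ h : ℝ) : ℝ := ∫ x in α..β, E x₀ h x

lemma N_pos (α β x₀ : ℝ) (hαβ : α < β) (h : ℝ) : 0 < N α β x₀ h :=
  intervalIntegral.intervalIntegral_pos_of_pos (intE x₀ h α β) (Epos x₀ h) hαβ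

lemma N_eq (α β x₀ : ℝ) (hαβ : α < β) (h : ℝ) :
    N α β x₀ h = ∫ x in Ioc α β, E x₀ h x :=
  intervalIntegral.integral_of_le hαβ.le

/-- Lower bound on `N`. -/
lemma N_lb {α β x₀ : ℝ} (hαβ : α < β) (hx₀ : x₀ ∈ Ioo α β) {c : ℝ} (hc : 0 < c)
    (hcl : α ≤ x₀ - c) (hcr : x₀ + c ≤ β) {h : ℝ} (hh : 0 < h) :
    2 * c * Real.exp (-c ^ 2 / h) ≤ N α β x₀ h := by
  have h1 : (2 * c) * Real.exp (-c ^ 2 / h)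
      = ∫ x in Ioc (x₀ - c) (x₀ + c), Real.exp (-c ^ 2 / h) := by
    rw [setIntegral_const]
    rw [Real.volume_real_Ioc]
    rw [show x₀ + c - (x₀ - c) = 2 * c by ring]
    rw [max_eq_left (by positivity)]
    rw [smul_eq_mul]
  rw [h1, N_eq α β x₀ hαβ]
  have h2 : ∫ x in Ioc (x₀ - c) (x₀ + c), Real.exp (-c ^ 2 / h)
      ≤ ∫ x in Ioc (x₀ - c) (x₀ + c), E x₀ h x := by
    apply setIntegral_mono_on
    · exact integrableOn_const measure_Ioc_lt_top.ne
    · exact (contE x₀ h).integrableOn_Ioc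
    · exact measurableSet_Ioc
    · intro x hx
      apply Real.exp_le_exp.2
      have hb : (x - x₀) ^ 2 ≤ c ^ 2 := by nlinarith [hx.1, hx.2]
      gcongr
  refine h2.trans (setIntegral_mono_set (contE x₀ h).integrableOn_Ioc ?_ ?_)
  · exact Eventually.of_forall fun x => (Epos x₀ h x).le
  · exact Eventually.of_forall (Ioc_subset_Ioc (by linarith) (by linarith))


lemma tendsto_B {c r : ℝ} (hc : 0 < c) (hcr : c < r) :
    Tendsto (fun h : ℝ => Real.exp ((c ^ 2 - r ^ 2) / h) / (2 * c)) (𝓝[>] 0) (𝓝 0) := by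
  have h1 : Tendsto (fun h : ℝ => (c ^ 2 - r ^ 2) / h) (𝓝[>] 0) atBot := by
    have h2 : Tendsto (fun h : ℝ => (r ^ 2 - c ^ 2) * h⁻¹) (𝓝[>] 0) atTop :=
      tendsto_inv_nhdsGT_zero.const_mul_atTop (by nlinarith)
    have h3 : Tendsto (fun h : ℝ => -((r ^ 2 - c ^ 2) * h⁻¹)) (𝓝[>] 0) atBot :=
      tendsto_neg_atBot_iff.2 h2
    refine h3.congr fun h => by ring
  have := (Real.tendsto_exp_atBot.comp h1).div_const (2 * c)
  simpa using this

/-- The key peak-function limit. -/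
lemma peak {α β x₀ : ℝ} (hαβ : α < β) (hx₀ : x₀ ∈ Ioo α β) {g : ℝ → ℝ} (hg : Continuous g) :
    Tendsto (fun h : ℝ => (∫ x in α..β, E x₀ h x * g x) / N α β x₀ h)
      (𝓝[>] 0) (𝓝 (g x₀)) := by
  obtain ⟨c, hc, hcl, hcr⟩ : ∃ c : ℝ, 0 < c ∧ α ≤ x₀ - c ∧ x₀ + c ≤ β :=
    ⟨min (x₀ - α) (β - x₀),
      lt_min (by linarith [hx₀.1]) (by linarith [hx₀.2]),
      by have := min_le_left (x₀ - α) (β - x₀); linarith,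
      by have := min_le_right (x₀ - α) (β - x₀); linarith⟩
  set φ : ℝ → ℝ → ℝ := fun h x => E x₀ h x / N α β x₀ h with hφ
  have key : Tendsto (fun h : ℝ => ∫ x in Ioc α β, φ h x • g x) (𝓝[>] 0) (𝓝 (g x₀)) := by
    apply tendsto_setIntegral_peak_smul_of_integrableOn_of_tendsto
      measurableSet_Ioc measurableSet_Ioc subset_rfl self_mem_nhdsWithin
      measure_Ioc_lt_top.ne
    · exact Eventually.of_forall fun h x _ =>
        div_nonneg (Epos x₀ h x).le (N_pos α β x₀ hαβ h).le
    · -- uniform convergence away from x₀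
      intro u hu hxu
      obtain ⟨r, hr, hru⟩ := Metric.isOpen_iff.1 hu x₀ hxu
      obtain ⟨c', hc'0, hc'c, hc'r⟩ : ∃ c' : ℝ, 0 < c' ∧ c' ≤ c ∧ c' < r :=
        ⟨min c r / 2, by positivity,
          by have := min_le_left c r; linarith,
          by have := min_le_right c r; linarith⟩
      have hBlim : Tendsto (fun h : ℝ => Real.exp ((c' ^ 2 - r ^ 2) / h) / (2 * c'))
          (𝓝[>] 0) (𝓝 0) := tendsto_B hc'0 hc'r
      rw [Metric.tendstoUniformlyOn_iff]
      intro ε hε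
      filter_upwards [self_mem_nhdsWithin, hBlim.eventually (gt_mem_nhds hε)]
        with h (hh : 0 < h) (hBh : Real.exp ((c' ^ 2 - r ^ 2) / h) / (2 * c') < ε) x hx
      have hxr : r ≤ |x - x₀| := by
        by_contra hlt
        exact hx.2 (hru (by simpa [Metric.mem_ball, Real.dist_eq] using not_le.1 hlt))
      have hE : E x₀ h x ≤ Real.exp (-r ^ 2 / h) := by
        apply Real.exp_le_exp.2
        have : r ^ 2 ≤ (x - x₀) ^ 2 := by
          calc r ^ 2 ≤ |x - x₀| ^ 2 := by gcongr
          _ = (x - x₀) ^ 2 := sq_abs _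
        gcongr
      have hNl : 2 * c' * Real.exp (-c' ^ 2 / h) ≤ N α β x₀ h :=
        N_lb hαβ hx₀ hc'0 (by linarith) (by linarith) hh
      have hφB : φ h x ≤ Real.exp ((c' ^ 2 - r ^ 2) / h) / (2 * c') := by
        have h2 : E x₀ h x / N α β x₀ h
            ≤ Real.exp (-r ^ 2 / h) / (2 * c' * Real.exp (-c' ^ 2 / h)) :=
          div_le_div₀ (Real.exp_pos _).le hE (by positivity) hNl
        refine h2.trans_eq ?_
        rw [show (c' ^ 2 - r ^ 2) / h = -r ^ 2 / h - -c' ^ 2 / h by ring, Real.exp_sub]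
        field_simp
      have hφ0 : 0 ≤ φ h x := div_nonneg (Epos x₀ h x).le (N_pos α β x₀ hαβ h).le
      simp only [Pi.zero_apply, Real.dist_eq]
      rw [abs_sub_comm, sub_zero, abs_of_nonneg hφ0]
      exact lt_of_le_of_lt hφB hBh
    · -- integral of φ tends to 1
      apply tendsto_const_nhds.congr fun h => ?_
      rw [hφ]
      simp only [div_eq_mul_inv]
      rw [integral_mul_const, ← N_eq α β x₀ hαβ,
        mul_inv_cancel₀ (N_pos α β x₀ hαβ h).ne']
    · exact Eventually.of_forall fun h =>
        ((contE x₀ h).div_const _).aestronglyMeasurable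
    · exact hg.integrableOn_Ioc
    · exact (hg.tendsto x₀).mono_left nhdsWithin_le_nhds
  refine key.congr fun h => ?_
  simp only [hφ, smul_eq_mul, div_mul_eq_mul_div]
  rw [integral_div, ← intervalIntegral.integral_of_le hαβ.le]


lemma hasDerivAt_gauss (x₀ h x : ℝ) :
    HasDerivAt (fun y => Real.exp (-(y - x₀) ^ 2 / (2 * h)))
      (Real.exp (-(x - x₀) ^ 2 / (2 * h)) * (-(2 * (x - x₀)) / (2 * h))) x := by
  have h2 : HasDerivAt (fun y : ℝ => y - x₀) 1 x := (hasDerivAt_id x).sub_const x₀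
  have h3 : HasDerivAt (fun y : ℝ => (y - x₀) ^ 2) (2 * (x - x₀)) x := by
    simpa using h2.fun_pow 2
  have h1 : HasDerivAt (fun y : ℝ => -(y - x₀) ^ 2 / (2 * h)) (-(2 * (x - x₀)) / (2 * h)) x :=
    h3.neg.div_const (2 * h)
  exact h1.exp

lemma sq_exp (x₀ x : ℝ) {h : ℝ} (hh : h ≠ 0) :
    Real.exp (-(x - x₀) ^ 2 / (2 * h)) ^ 2 = E x₀ h x := by
  rw [sq, ← Real.exp_add, E]
  congr 1
  field_simp
  ring

lemma quotient_eq {α β : ℝ} (hαβ : α < β) (σ : ℝ → ℝ) (hσ : Continuous σ) (x₀ : ℝ)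
    {h : ℝ} (hh : 0 < h) :
    (h ^ 2 * (∫ x in α..β, deriv (fun y => Real.exp (-(y - x₀) ^ 2 / (2 * h))) x ^ 2) -
      ∫ x in α..β, σ x * Real.exp (-(x - x₀) ^ 2 / (2 * h)) ^ 2) /
      ∫ x in α..β, Real.exp (-(x - x₀) ^ 2 / (2 * h)) ^ 2
    = (∫ x in α..β, E x₀ h x * ((x - x₀) ^ 2 - σ x)) / N α β x₀ h := by
  have hA : ∀ x : ℝ, deriv (fun y => Real.exp (-(y - x₀) ^ 2 / (2 * h))) x
      = Real.exp (-(x - x₀) ^ 2 / (2 * h)) * (-(2 * (x - x₀)) / (2 * h)) :=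
    fun x => (hasDerivAt_gauss x₀ h x).deriv
  have hsq : ∀ x : ℝ, Real.exp (-(x - x₀) ^ 2 / (2 * h)) ^ 2 = E x₀ h x :=
    fun x => sq_exp x₀ x hh.ne'
  have hden : (∫ x in α..β, Real.exp (-(x - x₀) ^ 2 / (2 * h)) ^ 2) = N α β x₀ h := by
    rw [N]; exact intervalIntegral.integral_congr fun x _ => hsq x
  have hder : h ^ 2 * (∫ x in α..β, deriv (fun y => Real.exp (-(y - x₀) ^ 2 / (2 * h))) x ^ 2)
      = ∫ x in α..β, E x₀ h x * (x - x₀) ^ 2 := by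
    rw [← intervalIntegral.integral_const_mul]
    refine intervalIntegral.integral_congr fun x _ => ?_
    rw [hA x, mul_pow, hsq x]
    rw [E]
    field_simp
  have hnum : (h ^ 2 * (∫ x in α..β, deriv (fun y => Real.exp (-(y - x₀) ^ 2 / (2 * h))) x ^ 2) -
      ∫ x in α..β, σ x * Real.exp (-(x - x₀) ^ 2 / (2 * h)) ^ 2)
      = ∫ x in α..β, E x₀ h x * ((x - x₀) ^ 2 - σ x) := by
    rw [hder]
    have hσe : (∫ x in α..β, σ x * Real.exp (-(x - x₀) ^ 2 / (2 * h)) ^ 2)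
        = ∫ x in α..β, σ x * E x₀ h x := intervalIntegral.integral_congr fun x _ => by rw [hsq x]
    rw [hσe, ← intervalIntegral.integral_sub]
    · exact intervalIntegral.integral_congr fun x _ => by ring
    · exact ((contE x₀ h).mul (by fun_prop)).intervalIntegrable _ _
    · exact ((hσ.mul (contE x₀ h))).intervalIntegrable _ _
  rw [hnum, hden]

end GaussQM

/-- Gaussian quasimode: the Rayleigh quotient of `φ_h(x) = exp(−(x−x₀)²/(2h))` converges
to `−σ(x₀)` as `h → 0⁺`; in particular, if `x₀` is an interior global maximizer of `σ`
on `[α,β]`, then `limsup_{h→0⁺} R(h) ≤ −max_{[α,β]} σ`. -/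
theorem rayleigh_quotient_gaussian_quasimode
    (α β : ℝ) (hαβ : α < β) (σ : ℝ → ℝ) (hσ : Continuous σ)
    (x₀ : ℝ) (hx₀ : x₀ ∈ Ioo α β) :
    Tendsto (fun h : ℝ =>
        (h ^ 2 * (∫ x in α..β,
            deriv (fun y => Real.exp (-(y - x₀) ^ 2 / (2 * h))) x ^ 2) -
          ∫ x in α..β, σ x * Real.exp (-(x - x₀) ^ 2 / (2 * h)) ^ 2) /
        ∫ x in α..β, Real.exp (-(x - x₀) ^ 2 / (2 * h)) ^ 2)
      (𝓝[>] (0:ℝ)) (𝓝 (-σ x₀)) ∧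
    ((∀ x ∈ Icc α β, σ x ≤ σ x₀) →
      Filter.limsup (fun h : ℝ => rayleighInf α β σ h) (𝓝[>] (0:ℝ)) ≤
        -(sSup (σ '' Icc α β))) := by
  have hg : Continuous (fun x => (x - x₀) ^ 2 - σ x) := by fun_prop
  have hpeak := GaussQM.peak hαβ hx₀ hg
  rw [show (x₀ - x₀) ^ 2 - σ x₀ = -σ x₀ by ring] at hpeak
  have hpart1 : Tendsto (fun h : ℝ =>
        (h ^ 2 * (∫ x in α..β,
            deriv (fun y => Real.exp (-(y - x₀) ^ 2 / (2 * h))) x ^ 2) -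
          ∫ x in α..β, σ x * Real.exp (-(x - x₀) ^ 2 / (2 * h)) ^ 2) /
        ∫ x in α..β, Real.exp (-(x - x₀) ^ 2 / (2 * h)) ^ 2)
      (𝓝[>] (0:ℝ)) (𝓝 (-σ x₀)) := by
    refine Filter.Tendsto.congr' ?_ hpeak
    filter_upwards [self_mem_nhdsWithin] with h (hh : 0 < h)
    exact (GaussQM.quotient_eq hαβ σ hσ x₀ hh).symm
  refine ⟨hpart1, fun hmax => ?_⟩
  have hx₀' : x₀ ∈ Icc α β := Ioo_subset_Icc_self hx₀
  have himg : ∀ y ∈ σ '' Icc α β, y ≤ σ x₀ := by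
    rintro y ⟨x, hx, rfl⟩; exact hmax x hx
  have hsup : sSup (σ '' Icc α β) = σ x₀ :=
    le_antisymm (csSup_le ⟨σ x₀, mem_image_of_mem σ hx₀'⟩ himg)
      (le_csSup ⟨σ x₀, himg⟩ (mem_image_of_mem σ hx₀'))
  -- lower bound for all elements of the Rayleigh set
  have hlb : ∀ h : ℝ, ∀ r ∈ { r : ℝ | ∃ φ : ℝ → ℝ, ContDiff ℝ 1 φ ∧
      (0 < ∫ x in α..β, φ x ^ 2) ∧
      r = (h ^ 2 * (∫ x in α..β, deriv φ x ^ 2) - ∫ x in α..β, σ x * φ x ^ 2) /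
        ∫ x in α..β, φ x ^ 2 }, -σ x₀ ≤ r := by
    intro h r hr
    obtain ⟨φ, hφ, hpos, rfl⟩ := hr
    have hA : 0 ≤ ∫ x in α..β, deriv φ x ^ 2 :=
      intervalIntegral.integral_nonneg hαβ.le fun x _ => sq_nonneg _
    have hB : (∫ x in α..β, σ x * φ x ^ 2) ≤ σ x₀ * ∫ x in α..β, φ x ^ 2 := by
      rw [← intervalIntegral.integral_const_mul]
      apply intervalIntegral.integral_mono_on hαβ.le
      · exact (hσ.mul (hφ.continuous.pow 2)).intervalIntegrable _ _
      · exact (continuous_const.mul (hφ.continuous.pow 2)).intervalIntegrable _ _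
      · intro x hx; exact mul_le_mul_of_nonneg_right (hmax x hx) (sq_nonneg _)
    rw [le_div_iff₀ hpos]
    have h2A : 0 ≤ h ^ 2 * ∫ x in α..β, deriv φ x ^ 2 := mul_nonneg (sq_nonneg h) hA
    linarith
  have hone : (0:ℝ) < ∫ x in α..β, (1:ℝ) ^ 2 := by
    simp only [one_pow, intervalIntegral.integral_const, smul_eq_mul, mul_one]
    linarith
  have hRlow : ∀ h : ℝ, -σ x₀ ≤ rayleighInf α β σ h := by
    intro h
    rw [rayleighInf]
    refine le_csInf ⟨((h ^ 2 * ∫ x in α..β, deriv (fun _ : ℝ => (1:ℝ)) x ^ 2) -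
        ∫ x in α..β, σ x * (1:ℝ) ^ 2) / ∫ x in α..β, (1:ℝ) ^ 2,
      ⟨fun _ => (1:ℝ), contDiff_const, hone, rfl⟩⟩ (hlb h)
  have hRQ : ∀ᶠ h in 𝓝[>] (0:ℝ), rayleighInf α β σ h ≤
      (h ^ 2 * (∫ x in α..β,
            deriv (fun y => Real.exp (-(y - x₀) ^ 2 / (2 * h))) x ^ 2) -
          ∫ x in α..β, σ x * Real.exp (-(x - x₀) ^ 2 / (2 * h)) ^ 2) /
        ∫ x in α..β, Real.exp (-(x - x₀) ^ 2 / (2 * h)) ^ 2 := by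
    filter_upwards [self_mem_nhdsWithin] with h (hh : 0 < h)
    rw [rayleighInf]
    apply csInf_le ⟨-σ x₀, fun r hr => hlb h r hr⟩
    have hcd : ContDiff ℝ 1 fun y : ℝ => Real.exp (-(y - x₀) ^ 2 / (2 * h)) :=
      Real.contDiff_exp.comp (((contDiff_id.sub contDiff_const).pow 2).neg.div_const _)
    refine ⟨fun y => Real.exp (-(y - x₀) ^ 2 / (2 * h)), hcd, ?_, rfl⟩
    apply intervalIntegral.intervalIntegral_pos_of_pos
      ((by fun_prop : Continuous fun x : ℝ =>
        Real.exp (-(x - x₀) ^ 2 / (2 * h)) ^ 2).intervalIntegrable _ _)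
      (fun x => by positivity) hαβ
  calc Filter.limsup (fun h : ℝ => rayleighInf α β σ h) (𝓝[>] (0:ℝ))
      ≤ _ := limsup_le_limsup hRQ
        (Filter.isCoboundedUnder_le_of_le _ fun h => hRlow h)
        hpart1.isBoundedUnder_le
    _ = -σ x₀ := hpart1.limsup_eq
    _ = -(sSup (σ '' Icc α β)) := by rw [hsup]
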